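/- Let Z ∈ ℝ^N be sorted descending with Z ≥ 0 and ⟨1, Π_{[0,1]^N}(Z)⟩ ≥ M, and let Y = Π_D(Z) be its projection onto D = {p ∈ [0,1]^N : Σ pₙ ≤ M}. Let i* = |{i : yᵢ = 1}|. Then the vector (y_{i*+1}, ..., y_N) equals the Euclidean projection of (z_{i*+1}, ..., z_N) onto the simplex S = {v ∈ [0,∞)^{N−i*} : Σⱼ vⱼ = M − i*}. -/

import Mathlib

open Finset

private lemma normsq {n : ℕ} (x : EuclideanSpace ℝ (Fin n)) :
    ‖x‖ ^ 2 = ∑ i, (x i) ^ 2 := by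
  rw [EuclideanSpace.norm_eq, Real.sq_sqrt (by positivity)]
  simp [sq_abs]

/-- The variational inequality for a minimizer over the truncated-simplex. -/
private lemma var_ineq {n : ℕ} {M : ℝ} {Z Y : Fin n → ℝ}
    (hY01 : ∀ i, 0 ≤ Y i ∧ Y i ≤ 1) (hYsum : (∑ i, Y i) ≤ M)
    (hproj2 : ∀ P : Fin n → ℝ, (∀ i, 0 ≤ P i ∧ P i ≤ 1) → (∑ i, P i) ≤ M →
      ∑ i, (Z i - Y i) ^ 2 ≤ ∑ i, (Z i - P i) ^ 2)
    (P : Fin n → ℝ) (h1 : ∀ i, 0 ≤ P i ∧ P i ≤ 1) (h2 : (∑ i, P i) ≤ M) :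
    ∑ i, (Z i - Y i) * (P i - Y i) ≤ 0 := by
  by_contra hc
  push_neg at hc
  set A := ∑ i, (Z i - Y i) * (P i - Y i) with hA
  set B := ∑ i, (P i - Y i) ^ 2 with hB
  have hB0 : 0 ≤ B := Finset.sum_nonneg fun i _ => sq_nonneg _
  have key : ∀ t : ℝ, 0 < t → t ≤ 1 → 2 * t * A ≤ t ^ 2 * B := by
    intro t ht0 ht1
    have hq1 : ∀ i, 0 ≤ Y i + t * (P i - Y i) ∧ Y i + t * (P i - Y i) ≤ 1 := by
      intro i
      obtain ⟨ha, hb⟩ := h1 i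
      obtain ⟨hc', hd⟩ := hY01 i
      constructor <;> nlinarith
    have hq2 : (∑ i, (Y i + t * (P i - Y i))) ≤ M := by
      have : (∑ i, (Y i + t * (P i - Y i)))
          = (1 - t) * (∑ i, Y i) + t * (∑ i, P i) := by
        rw [Finset.mul_sum, Finset.mul_sum, ← Finset.sum_add_distrib]
        exact Finset.sum_congr rfl fun i _ => by ring
      rw [this]
      nlinarith
    have h := hproj2 (fun i => Y i + t * (P i - Y i)) hq1 hq2
    have hexp : ∑ i, (Z i - (Y i + t * (P i - Y i))) ^ 2
        = ∑ i, (Z i - Y i) ^ 2 - 2 * t * A + t ^ 2 * B := by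
      rw [hA, hB, Finset.mul_sum, Finset.mul_sum, ← Finset.sum_sub_distrib,
        ← Finset.sum_add_distrib]
      exact Finset.sum_congr rfl fun i _ => by ring
    rw [hexp] at h
    linarith
  rcases eq_or_lt_of_le hB0 with hBeq | hBlt
  · have := key 1 one_pos le_rfl
    rw [← hBeq] at this
    nlinarith
  · have ht0 : 0 < min 1 (A / B) := lt_min one_pos (div_pos hc hBlt)
    have ht1 : min 1 (A / B) ≤ 1 := min_le_left _ _
    have h := key _ ht0 ht1
    have h2' : (min 1 (A / B)) * B ≤ A := by
      have hd : (A / B) * B = A := div_mul_cancel₀ A (ne_of_gt hBlt)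
      calc (min 1 (A / B)) * B ≤ (A / B) * B :=
            mul_le_mul_of_nonneg_right (min_le_right _ _) hBlt.le
        _ = A := hd
    nlinarith [ht0, h2']

/-- Transfer of mass inequality. -/
private lemma pert {n : ℕ} {M : ℝ} {Z Y : Fin n → ℝ}
    (hY01 : ∀ i, 0 ≤ Y i ∧ Y i ≤ 1) (hYsum : (∑ i, Y i) ≤ M)
    (hvar : ∀ P : Fin n → ℝ, (∀ i, 0 ≤ P i ∧ P i ≤ 1) → (∑ i, P i) ≤ M →
      ∑ i, (Z i - Y i) * (P i - Y i) ≤ 0)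
    (a b : Fin n) (hab : a ≠ b) (ha : Y a < 1) (hb : 0 < Y b) :
    Z a - Y a ≤ Z b - Y b := by
  set ε := min (1 - Y a) (Y b) with hε
  have hε0 : 0 < ε := lt_min (by linarith) hb
  set P : Fin n → ℝ := fun i => if i = a then Y a + ε else if i = b then Y b - ε else Y i
    with hP
  have hPY : ∀ i, P i - Y i = (if i = a then ε else 0) - (if i = b then ε else 0) := by
    intro i
    by_cases h1 : i = a
    · subst h1; simp [hP, hab]
    · by_cases h2 : i = b
      · subst h2; simp [hP, h1]
      · simp [hP, h1, h2]
  have h1 : ∀ i, 0 ≤ P i ∧ P i ≤ 1 := by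
    intro i
    obtain ⟨hc', hd⟩ := hY01 i
    by_cases hia : i = a
    · subst hia
      have : ε ≤ 1 - Y i := min_le_left _ _
      constructor <;> simp [hP] <;> linarith
    · by_cases hib : i = b
      · subst hib
        have : ε ≤ Y i := min_le_right _ _
        constructor <;> simp [hP, hia] <;> linarith
      · simp [hP, hia, hib]; exact ⟨hc', hd⟩
  have hsum : (∑ i, P i) = ∑ i, Y i := by
    have h0 : (∑ i, (P i - Y i)) = 0 := by
      rw [Finset.sum_congr rfl fun i _ => hPY i, Finset.sum_sub_distrib]
      simp
    have h2 := Finset.sum_sub_distrib (s := (univ : Finset (Fin n)))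
      (f := P) (g := fun i => Y i)
    rw [h2] at h0
    linarith
  have hv := hvar P h1 (by rw [hsum]; exact hYsum)
  have hval : ∑ i, (Z i - Y i) * (P i - Y i)
      = ε * ((Z a - Y a) - (Z b - Y b)) := by
    rw [Finset.sum_congr rfl fun i _ => by rw [hPY i]]
    have key : ∀ i : Fin n, (Z i - Y i) * ((if i = a then ε else 0) - (if i = b then ε else 0))
        = (if i = a then (Z i - Y i) * ε else 0) - (if i = b then (Z i - Y i) * ε else 0) := by
      intro i
      by_cases hia : i = a
      · subst hia; simp only [if_pos rfl, if_true, if_neg hab]; ring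
      · by_cases hib : i = b
        · subst hib; simp only [if_pos rfl, if_true, if_neg hia]; ring
        · simp only [if_neg hia, if_neg hib]; ring
    rw [Finset.sum_congr rfl fun i _ => key i, Finset.sum_sub_distrib,
      Finset.sum_ite_eq' univ a (fun i => (Z i - Y i) * ε),
      Finset.sum_ite_eq' univ b (fun i => (Z i - Y i) * ε)]
    simp; ring
  rw [hval] at hv
  nlinarith

/-- The sum constraint is active. -/
private lemma sum_active {n : ℕ} {M : ℝ} {Z Y : Fin n → ℝ}
    (hZnonneg : ∀ i, 0 ≤ Z i)
    (hcube : M ≤ ∑ i, min 1 (max 0 (Z i)))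
    (hY01 : ∀ i, 0 ≤ Y i ∧ Y i ≤ 1) (hYsumle : (∑ i, Y i) ≤ M)
    (hvar : ∀ P : Fin n → ℝ, (∀ i, 0 ≤ P i ∧ P i ≤ 1) → (∑ i, P i) ≤ M →
      ∑ i, (Z i - Y i) * (P i - Y i) ≤ 0) :
    ∑ i, Y i = M := by
  by_contra h
  have hlt : ∑ i, Y i < M := lt_of_le_of_ne hYsumle h
  set C : Fin n → ℝ := fun i => min 1 (max 0 (Z i)) with hC
  have hC01 : ∀ i, 0 ≤ C i ∧ C i ≤ 1 := by
    intro i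
    exact ⟨le_min zero_le_one (le_max_left _ _), min_le_left _ _⟩
  have hCZ : ∀ i, (Z i - C i) * (Y i - C i) ≤ 0 := by
    intro i
    obtain ⟨h0, h1⟩ := hY01 i
    rcases le_total (Z i) 1 with hz | hz
    · have : C i = Z i := by
        simp [hC, max_eq_right (hZnonneg i), min_eq_right hz]
      rw [this]; simp
    · have : C i = 1 := by
        simp [hC, max_eq_right (hZnonneg i), min_eq_left hz]
      rw [this]
      nlinarith
  set s := ∑ i, Y i with hs
  set c := ∑ i, C i with hcs'
  have hCsum : M ≤ c := hcube
  have hscM : s < c := lt_of_lt_of_le hlt hCsum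
  set t := (M - s) / (c - s) with ht
  have ht0 : 0 < t := div_pos (by linarith) (by linarith)
  have ht1 : t ≤ 1 := (div_le_one (by linarith)).mpr (by linarith)
  have hq1 : ∀ i, 0 ≤ Y i + t * (C i - Y i) ∧ Y i + t * (C i - Y i) ≤ 1 := by
    intro i
    obtain ⟨ha, hb⟩ := hC01 i
    obtain ⟨hc', hd⟩ := hY01 i
    constructor <;> nlinarith
  have hq2 : (∑ i, (Y i + t * (C i - Y i))) ≤ M := by
    have hsum : (∑ i, (Y i + t * (C i - Y i))) = (1 - t) * s + t * c := by
      rw [hs, hcs', Finset.mul_sum, Finset.mul_sum, ← Finset.sum_add_distrib]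
      exact Finset.sum_congr rfl fun i _ => by ring
    rw [hsum]
    have hne0 : c - s ≠ 0 := sub_ne_zero.mpr (ne_of_gt hscM)
    have hd : t * (c - s) = M - s := by
      rw [ht, div_mul_cancel₀ _ hne0]
    nlinarith [hd]
  have hv := hvar _ hq1 hq2
  have hAle : ∑ i, (Z i - Y i) * (C i - Y i) ≤ 0 := by
    have heq : ∑ i, (Z i - Y i) * (Y i + t * (C i - Y i) - Y i)
        = t * ∑ i, (Z i - Y i) * (C i - Y i) := by
      rw [Finset.mul_sum]
      exact Finset.sum_congr rfl fun i _ => by ring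
    rw [heq] at hv
    nlinarith
  have hsq : ∑ i, (C i - Y i) ^ 2 ≤ 0 := by
    have hid : ∑ i, (C i - Y i) ^ 2
        = ∑ i, (Z i - C i) * (Y i - C i) + ∑ i, (Z i - Y i) * (C i - Y i) := by
      rw [← Finset.sum_add_distrib]
      exact Finset.sum_congr rfl fun i _ => by ring
    have h1 : ∑ i, (Z i - C i) * (Y i - C i) ≤ 0 :=
      Finset.sum_nonpos fun i _ => hCZ i
    linarith
  have hCeqY : ∀ i : Fin n, C i = Y i := by
    intro i
    have h0 : ∀ j ∈ (univ : Finset (Fin n)), (0:ℝ) ≤ (C j - Y j) ^ 2 :=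
      fun j _ => sq_nonneg _
    have h1 := (Finset.sum_eq_zero_iff_of_nonneg h0).mp
      (le_antisymm hsq (Finset.sum_nonneg h0))
    have h2 := h1 i (Finset.mem_univ i)
    have h3 := sq_eq_zero_iff.mp h2
    linarith
  have : c = s := by
    rw [hcs', hs]
    exact Finset.sum_congr rfl fun i _ => hCeqY i
  exact absurd this (ne_of_gt hscM)

/-- The ones of a sorted vector form an initial segment. -/
private lemma head_iff {n istar : ℕ} {Y : Fin n → ℝ}
    (hY01 : ∀ i, 0 ≤ Y i ∧ Y i ≤ 1)
    (hYsorted : ∀ i j : Fin n, i ≤ j → Y j ≤ Y i)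
    (histar : istar = (Finset.univ.filter (fun i : Fin n => Y i = 1)).card)
    (i : Fin n) : Y i = 1 ↔ (i : ℕ) < istar := by
  constructor
  · intro h1
    have hsub : Finset.Iic i ⊆ univ.filter (fun j : Fin n => Y j = 1) := by
      intro j hj
      simp only [Finset.mem_Iic] at hj
      simp only [Finset.mem_filter, Finset.mem_univ, true_and]
      have := hYsorted j i hj
      have := (hY01 j).2
      linarith
    have := Finset.card_le_card hsub
    rw [Fin.card_Iic] at this
    omega
  · intro h
    by_contra h1
    have hi1 : Y i < 1 := lt_of_le_of_ne (hY01 i).2 h1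
    have hsub : univ.filter (fun j : Fin n => Y j = 1) ⊆ Finset.Iio i := by
      intro j hj
      simp only [Finset.mem_filter, Finset.mem_univ, true_and] at hj
      simp only [Finset.mem_Iio]
      by_contra hji
      push_neg at hji
      have := hYsorted i j hji
      linarith
    have := Finset.card_le_card hsub
    rw [Fin.card_Iio] at this
    omega

/-- Sum of the tail. -/
private lemma tail_sum {n istar : ℕ} {Mr : ℝ} (histarN : istar ≤ n) (Y : Fin n → ℝ)
    (hYsum : ∑ i, Y i = Mr)
    (hone : ∀ i : Fin n, (i : ℕ) < istar → Y i = 1)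
    (Yt : Fin (n - istar) → ℝ)
    (hYt : ∀ j : Fin (n - istar), Yt j = Y ⟨(j : ℕ) + istar, by have := j.isLt; omega⟩) :
    ∑ j, Yt j = Mr - istar := by
  set g : ℕ → ℝ := fun k => if h : k < n then Y ⟨k, h⟩ else 0 with hg
  have hgY : ∀ i : Fin n, g (i : ℕ) = Y i := by
    intro i
    simp only [hg, dif_pos i.isLt, Fin.eta]
  have h1 : ∑ k ∈ Finset.range n, g k = Mr := by
    rw [← Fin.sum_univ_eq_sum_range g n, Finset.sum_congr rfl fun i _ => hgY i]
    exact hYsum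
  have hheadsum : ∑ k ∈ Finset.range istar, g k = (istar : ℝ) := by
    have honek : ∀ k ∈ Finset.range istar, g k = 1 := by
      intro k hk
      rw [Finset.mem_range] at hk
      have hkN : k < n := lt_of_lt_of_le hk histarN
      simp only [hg, dif_pos hkN]
      exact hone ⟨k, hkN⟩ hk
    rw [Finset.sum_congr rfl honek, Finset.sum_const, Finset.card_range]
    simp
  have hsum_split : ∑ k ∈ Finset.range istar, g k + ∑ k ∈ Finset.Ico istar n, g k
      = ∑ k ∈ Finset.range n, g k := by
    rw [Finset.range_eq_Ico, Finset.range_eq_Ico]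
    exact Finset.sum_Ico_consecutive g (Nat.zero_le istar) histarN
  have htailIco : ∑ k ∈ Finset.Ico istar n, g k = Mr - istar := by
    rw [h1, hheadsum] at hsum_split
    linarith
  have h2 : ∑ j : Fin (n - istar), Yt j
      = ∑ k ∈ Finset.range (n - istar), g (istar + k) := by
    rw [← Fin.sum_univ_eq_sum_range (fun k => g (istar + k)) (n - istar)]
    apply Finset.sum_congr rfl
    intro j _
    have hlt : istar + (j : ℕ) < n := by have := j.isLt; omega
    rw [hYt j]
    simp only [hg, dif_pos hlt]
    apply congrArg
    exact Fin.ext (by simp [Nat.add_comm])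
  rw [h2, ← Finset.sum_Ico_eq_sum_range]
  exact htailIco

/-- Optimality of the tail, the case where some tail coordinate is positive. -/
private lemma opt {n m istar : ℕ} {Mr : ℝ}
    (Z Y : Fin n → ℝ)
    (hpert : ∀ a b : Fin n, a ≠ b → Y a < 1 → 0 < Y b → Z a - Y a ≤ Z b - Y b)
    (hmn : m = n - istar) (hm : m + istar ≤ n)
    (Ytail Ztail : Fin m → ℝ)
    (hYtail : ∀ j : Fin m, Ytail j = Y ⟨(j : ℕ) + istar, by have := j.isLt; omega⟩)
    (hZtail : ∀ j : Fin m, Ztail j = Z ⟨(j : ℕ) + istar, by have := j.isLt; omega⟩)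
    (htail_lt1 : ∀ j : Fin m, Ytail j < 1)
    (hYtail0 : ∀ j, 0 ≤ Ytail j)
    (hYtailsum : ∑ j : Fin m, Ytail j = Mr)
    (V : Fin m → ℝ)
    (hV0 : ∀ j, 0 ≤ V j) (hVsum : ∑ j, V j = Mr)
    (k0 : Fin m) (hk0 : 0 < Ytail k0) :
    ∑ j, (Ztail j - Ytail j) * (V j - Ytail j) ≤ 0 := by
  set lam := Ztail k0 - Ytail k0 with hlam
  have hkey : ∀ j : Fin m,
      (Ztail j - Ytail j) * (V j - Ytail j) ≤ lam * (V j - Ytail j) := by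
    intro j
    by_cases hjk : j = k0
    · subst hjk; exact le_of_eq rfl
    · have hjlt := j.isLt
      have hklt := k0.isLt
      have hne : (⟨(j : ℕ) + istar, by omega⟩ : Fin n) ≠ ⟨(k0 : ℕ) + istar, by omega⟩ := by
        intro hc
        apply hjk
        apply Fin.ext
        have hvv := congrArg Fin.val hc
        simp only [Fin.val_mk] at hvv
        omega
      have hpert1 : Ztail j - Ytail j ≤ lam := by
        have := hpert ⟨(j : ℕ) + istar, by omega⟩ ⟨(k0 : ℕ) + istar, by omega⟩ hne
          (by rw [← hYtail j]; exact htail_lt1 j) (by rw [← hYtail k0]; exact hk0)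
        rw [hlam, hYtail j, hZtail j, hYtail k0, hZtail k0]
        exact this
      rcases lt_or_eq_of_le (hYtail0 j) with hpos | hzero
      · have hpert2 : lam ≤ Ztail j - Ytail j := by
          have := hpert ⟨(k0 : ℕ) + istar, by omega⟩ ⟨(j : ℕ) + istar, by omega⟩
            (Ne.symm hne) (by rw [← hYtail k0]; exact htail_lt1 k0)
            (by rw [← hYtail j]; exact hpos)
          rw [hlam, hYtail j, hZtail j, hYtail k0, hZtail k0]
          exact this
        have : Ztail j - Ytail j = lam := le_antisymm hpert1 hpert2
        rw [this]
      · have hz : Ytail j = 0 := hzero.symm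
        have hVj : 0 ≤ V j - Ytail j := by rw [hz, sub_zero]; exact hV0 j
        exact mul_le_mul_of_nonneg_right hpert1 hVj
  have hstep : ∑ j, (Ztail j - Ytail j) * (V j - Ytail j)
      ≤ ∑ j, lam * (V j - Ytail j) := Finset.sum_le_sum fun j _ => hkey j
  have hzero : ∑ j, lam * (V j - Ytail j) = 0 := by
    have : ∑ j, lam * (V j - Ytail j) = lam * (∑ j, V j - ∑ j, Ytail j) := by
      rw [← Finset.sum_sub_distrib, Finset.mul_sum]
    rw [this, hVsum, hYtailsum]
    ring
  linarith

theorem stmt_6 (N M : ℕ) (hM : 0 < M) (hMN : M ≤ N)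
    (Z Y : EuclideanSpace ℝ (Fin N))
    (hZnonneg : ∀ i, 0 ≤ Z i)
    (hsort : ∀ i j : Fin N, i ≤ j → Z j ≤ Z i)
    (hcube : (M : ℝ) ≤ ∑ i, min 1 (max 0 (Z i)))
    (D : Set (EuclideanSpace ℝ (Fin N)))
    (hD : D = {p | (∀ n, 0 ≤ p n ∧ p n ≤ 1) ∧ ∑ n, p n ≤ (M : ℝ)})
    (hYD : Y ∈ D) (hproj : ∀ P ∈ D, ‖Z - Y‖ ≤ ‖Z - P‖)
    (istar : ℕ) (histar : istar = (Finset.univ.filter (fun i : Fin N => Y i = 1)).card)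
    (Ytail Ztail : EuclideanSpace ℝ (Fin (N - istar)))
    (hYtail : ∀ j : Fin (N - istar), Ytail j = Y ⟨(j : ℕ) + istar, by have := j.isLt; omega⟩)
    (hZtail : ∀ j : Fin (N - istar), Ztail j = Z ⟨(j : ℕ) + istar, by have := j.isLt; omega⟩)
    (S : Set (EuclideanSpace ℝ (Fin (N - istar))))
    (hS : S = {v | (∀ j, 0 ≤ v j) ∧ ∑ j, v j = (M : ℝ) - istar}) :
    Ytail ∈ S ∧ ∀ V ∈ S, ‖Ztail - Ytail‖ ≤ ‖Ztail - V‖ := by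
  subst hD hS
  obtain ⟨hY01, hYsumle⟩ := hYD
  have hproj2 : ∀ P : Fin N → ℝ, (∀ i, 0 ≤ P i ∧ P i ≤ 1) → (∑ i, P i) ≤ (M : ℝ) →
      ∑ i, (Z i - Y i) ^ 2 ≤ ∑ i, (Z i - P i) ^ 2 := by
    intro P h1 h2
    have h := hproj (show EuclideanSpace ℝ (Fin N) from WithLp.toLp 2 P) ⟨h1, h2⟩
    have h' : ‖Z - Y‖ ^ 2 ≤ ‖Z - (show EuclideanSpace ℝ (Fin N) from WithLp.toLp 2 P)‖ ^ 2 :=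
      pow_le_pow_left₀ (norm_nonneg _) h 2
    rw [normsq, normsq] at h'
    exact h'
  have hvar : ∀ P : Fin N → ℝ, (∀ i, 0 ≤ P i ∧ P i ≤ 1) → (∑ i, P i) ≤ (M : ℝ) →
      ∑ i, (Z i - Y i) * (P i - Y i) ≤ 0 :=
    fun P h1 h2 => var_ineq hY01 hYsumle hproj2 P h1 h2
  have hpert : ∀ a b : Fin N, a ≠ b → Y a < 1 → 0 < Y b → Z a - Y a ≤ Z b - Y b :=
    fun a b => pert hY01 hYsumle hvar a b
  have hYsorted : ∀ i j : Fin N, i ≤ j → Y j ≤ Y i := by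
    intro i j hij
    by_contra hlt
    push_neg at hlt
    have hij' : i ≠ j := by rintro rfl; exact lt_irrefl _ hlt
    have h1 : Y i < 1 := lt_of_lt_of_le hlt (hY01 j).2
    have h2 : 0 < Y j := lt_of_le_of_lt (hY01 i).1 hlt
    have := hpert i j hij' h1 h2
    have := hsort i j hij
    linarith
  have hhead : ∀ i : Fin N, Y i = 1 ↔ (i : ℕ) < istar :=
    head_iff hY01 hYsorted histar
  have hYsum : ∑ i, Y i = (M : ℝ) :=
    sum_active hZnonneg hcube hY01 hYsumle hvar
  have histarN : istar ≤ N := by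
    rw [histar]
    calc (univ.filter (fun i : Fin N => Y i = 1)).card ≤ (univ : Finset (Fin N)).card :=
          Finset.card_filter_le _ _
      _ = N := by simp
  have hYtailsum : ∑ j : Fin (N - istar), Ytail j = (M : ℝ) - istar :=
    tail_sum histarN Y hYsum (fun i hi => (hhead i).mpr hi) Ytail hYtail
  have hYtail0 : ∀ j, 0 ≤ Ytail j := fun j => by rw [hYtail]; exact (hY01 _).1
  have htail_lt1 : ∀ j : Fin (N - istar), Ytail j < 1 := by
    intro j
    rw [hYtail]
    have h := (hY01 ⟨(j : ℕ) + istar, by have := j.isLt; omega⟩).2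
    rcases lt_or_eq_of_le h with h1 | h1
    · exact h1
    · exfalso
      have h2 := (hhead _).mp h1
      have h3 : (j : ℕ) + istar < istar := h2
      omega
  refine ⟨⟨hYtail0, hYtailsum⟩, ?_⟩
  intro V hV
  obtain ⟨hV0, hVsum⟩ := hV
  have hm : (N - istar) + istar ≤ N := by omega
  have hAle : ∑ j, (Ztail j - Ytail j) * (V j - Ytail j) ≤ 0 := by
    by_cases hex : ∃ k : Fin (N - istar), 0 < Ytail k
    · obtain ⟨k0, hk0⟩ := hex
      exact opt Z Y hpert rfl hm Ytail Ztail hYtail hZtail htail_lt1 hYtail0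
        hYtailsum V hV0 hVsum k0 hk0
    · push_neg at hex
      have hY0 : ∀ j, Ytail j = 0 := fun j => le_antisymm (hex j) (hYtail0 j)
      have hVsum0 : ∑ j, V j = 0 := by
        rw [hVsum, ← hYtailsum, Finset.sum_congr rfl fun j _ => hY0 j]
        exact Finset.sum_const_zero
      have hV0' : ∀ j, V j = 0 := fun j =>
        (Finset.sum_eq_zero_iff_of_nonneg (fun j _ => hV0 j)).mp hVsum0 j (Finset.mem_univ j)
      apply le_of_eq
      apply Finset.sum_eq_zero
      intro j _
      rw [hY0 j, hV0' j]
      ring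
  have hsq : ‖Ztail - Ytail‖ ^ 2 ≤ ‖Ztail - V‖ ^ 2 := by
    rw [normsq, normsq]
    have hid : ∑ j, (Ztail j - V j) ^ 2
        = ∑ j, (Ztail j - Ytail j) ^ 2
          - 2 * (∑ j, (Ztail j - Ytail j) * (V j - Ytail j))
          + ∑ j, (V j - Ytail j) ^ 2 := by
      rw [Finset.mul_sum, ← Finset.sum_sub_distrib, ← Finset.sum_add_distrib]
      exact Finset.sum_congr rfl fun j _ => by ring
    have hpos : (0:ℝ) ≤ ∑ j, (V j - Ytail j) ^ 2 := Finset.sum_nonneg fun j _ => sq_nonneg _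
    have key : ∑ j, (Ztail j - Ytail j) ^ 2 ≤ ∑ j, (Ztail j - V j) ^ 2 := by linarith
    exact key
  exact le_of_pow_le_pow_left₀ two_ne_zero (norm_nonneg _) hsq
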